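/- For every d ≥ 2, the space ℝ^d is not the union of d sprays: for any points c₁, …, c_d ∈ ℝ^d and any sets X₁, …, X_d ⊆ ℝ^d such that each X_i is a spray with center c_i, the union X₁ ∪ ⋯ ∪ X_d is not all of ℝ^d. -/

import Mathlib

open scoped RealInnerProductSpace
open Module Submodule Set

/-- A spray with center `c`: every sphere centered at `c` meets `X` in a finite set. -/
def IsSpray {d : ℕ} (c : EuclideanSpace ℝ (Fin d)) (X : Set (EuclideanSpace ℝ (Fin d))) : Prop :=
  ∀ r : ℝ, {x ∈ X | ‖x - c‖ = r}.Finite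

/-- An uncountable interval avoids any countable set. -/
lemma aux_exists_Ioo_not_mem {a b : ℝ} (h : a < b) {S : Set ℝ} (hS : S.Countable) :
    ∃ x, x ∈ Set.Ioo a b ∧ x ∉ S := by
  by_contra h'
  push_neg at h'
  have hsub : Set.Ioo a b ⊆ S := fun x hx => h' x hx
  have : (Set.Ioo a b).Countable := hS.mono hsub
  rw [← Cardinal.le_aleph0_iff_set_countable, Cardinal.mk_Ioo_real h] at this
  exact absurd this (not_le.2 Cardinal.aleph0_lt_continuum)

/-- Pigeonhole: if ℕ is covered by finitely many sets, one is infinite. -/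
lemma aux_pigeonhole {ι : Type*} [Finite ι] (A : ι → Set ℕ) (h : ∀ k, ∃ i, k ∈ A i) :
    ∃ i, (A i).Infinite := by
  by_contra h'
  push_neg at h'
  have : (Set.univ : Set ℕ).Finite :=
    (Set.finite_iUnion h').subset fun k _ => Set.mem_iUnion.2 (h k)
  exact Set.infinite_univ this

section

variable {d : ℕ}

local notation "E" => EuclideanSpace ℝ (Fin d)

/-- derivative of squared distance -/
lemma aux_sq_deriv (c x₀ : E) :
    HasStrictFDerivAt (fun x : E => (⟪x - c, x - c⟫ : ℝ))
      ((2 : ℝ) • (innerSL ℝ (x₀ - c))) x₀ := by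
  have h1 : HasStrictFDerivAt (fun x : E => x - c) (ContinuousLinearMap.id ℝ E) x₀ :=
    (hasStrictFDerivAt_id x₀).sub_const c
  have h2 := h1.inner ℝ h1
  refine h2.congr_fderiv ?_
  ext v
  simp only [ContinuousLinearMap.smul_apply, innerSL_apply_apply, ContinuousLinearMap.coe_comp',
    Function.comp_apply, ContinuousLinearMap.prod_apply, ContinuousLinearMap.coe_id', id_eq,
    fderivInnerCLM_apply, smul_eq_mul]
  rw [real_inner_comm v (x₀ - c)]
  ring

lemma aux_phi_deriv (c : Fin d → E) (x₀ : E) :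
    HasStrictFDerivAt (fun x : E => (fun i => (⟪x - c i, x - c i⟫ : ℝ)))
      (ContinuousLinearMap.pi fun i => (2 : ℝ) • innerSL ℝ (x₀ - c i)) x₀ := by
  apply hasStrictFDerivAt_pi'.2
  intro i
  rw [ContinuousLinearMap.proj_pi]
  exact aux_sq_deriv (c i) x₀

lemma aux_phi_bij (c : Fin d → E) (x₀ : E)
    (hspan : span ℝ (Set.range fun i => x₀ - c i) = ⊤) :
    Function.Bijective (ContinuousLinearMap.pi fun i => (2 : ℝ) • innerSL ℝ (x₀ - c i)) := by
  set L := ContinuousLinearMap.pi fun i => (2 : ℝ) • innerSL ℝ (x₀ - c i) with hL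
  have hker : ∀ v : EuclideanSpace ℝ (Fin d), L v = 0 → v = 0 := by
    intro v hv
    have hv' : ∀ i, ⟪x₀ - c i, v⟫ = 0 := by
      intro i
      have := congrFun hv i
      simp only [hL, ContinuousLinearMap.coe_coe, ContinuousLinearMap.pi_apply,
        ContinuousLinearMap.smul_apply, innerSL_apply_apply, Pi.zero_apply, smul_eq_mul] at this ⊢
      linarith
    have hveq : ∀ y ∈ span ℝ (Set.range fun i => x₀ - c i), ⟪y, v⟫ = 0 := by
      intro y hy
      induction hy using Submodule.span_induction with
      | mem y hy => obtain ⟨i, rfl⟩ := hy; exact hv' i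
      | zero => simp
      | add y z _ _ hy hz => rw [inner_add_left, hy, hz, add_zero]
      | smul a y _ hy => rw [real_inner_smul_left, hy, mul_zero]
    have : ⟪v, v⟫ = 0 := hveq v (hspan ▸ Submodule.mem_top)
    exact inner_self_eq_zero.mp this
  have hinj : Function.Injective (L.toLinearMap) := by
    intro v w hvw
    have : L (v - w) = 0 := by
      have h' : L v = L w := hvw
      rw [map_sub, h', sub_self]
    have := hker _ this
    exact sub_eq_zero.mp this
  have hsurj := (LinearMap.injective_iff_surjective_of_finrank_eq_finrank
      (V := E) (V₂ := Fin d → ℝ)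
      (by simp [finrank_euclideanSpace_fin, Module.finrank_fintype_fun_eq_card])
      (f := L.toLinearMap)).mp hinj
  exact ⟨hinj, hsurj⟩

end

theorem stmt2 (d : ℕ) (hd : 2 ≤ d)
    (c : Fin d → EuclideanSpace ℝ (Fin d))
    (X : Fin d → Set (EuclideanSpace ℝ (Fin d)))
    (hX : ∀ i, IsSpray (c i) (X i)) :
    (⋃ i, X i) ≠ Set.univ := by
  classical
  intro hU
  have hi0pos : 0 < d := by omega
  set i₀ : Fin d := ⟨0, by omega⟩ with hi₀def
  set t : Finset (EuclideanSpace ℝ (Fin d)) :=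
    (Finset.univ.erase i₀).image (fun j => c j - c i₀) with ht
  set W : Submodule ℝ (EuclideanSpace ℝ (Fin d)) := span ℝ (t : Set _) with hWdef
  have hmem : ∀ j, c j - c i₀ ∈ W := by
    intro j
    by_cases hj : j = i₀
    · subst hj; simp only [sub_self]; exact W.zero_mem
    · exact subset_span (by simp [ht, Finset.mem_image]; exact ⟨j, hj, rfl⟩)
  have hWcard : finrank ℝ W ≤ d - 1 := by
    have h1 := finrank_span_le_card (R := ℝ) ((t : Set (EuclideanSpace ℝ (Fin d))))
    rw [Finset.toFinset_coe] at h1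
    refine h1.trans ?_
    calc t.card ≤ (Finset.univ.erase i₀).card := Finset.card_image_le
      _ = d - 1 := by
          rw [Finset.card_erase_of_mem (Finset.mem_univ _)]
          simp
  have horth : finrank ℝ W + finrank ℝ Wᗮ = d := by
    rw [W.finrank_add_finrank_orthogonal, finrank_euclideanSpace_fin]
  by_cases hcase : finrank ℝ W = d - 1
  · -- Case B : centers affinely independent
    have hb1 : finrank ℝ Wᗮ = 1 := by omega
    have hbne : Wᗮ ≠ ⊥ := by
      intro h
      rw [h, finrank_bot] at hb1
      omega
    obtain ⟨ν, hν, hν0⟩ := Submodule.ne_bot_iff _ |>.mp hbne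
    set x₀ : EuclideanSpace ℝ (Fin d) := c i₀ + ν with hx₀
    have hspan : span ℝ (Set.range fun i => x₀ - c i) = ⊤ := by
      set S := span ℝ (Set.range fun i => x₀ - c i) with hS
      have hν_mem : ν ∈ S := by
        have h0 : x₀ - c i₀ ∈ S := subset_span ⟨i₀, rfl⟩
        rwa [hx₀, add_sub_cancel_left] at h0
      have hWS : W ≤ S := by
        rw [hWdef, span_le]
        intro y hy
        rw [ht] at hy
        simp only [Finset.coe_image, Set.mem_image, Finset.coe_erase, Set.mem_diff] at hy
        obtain ⟨j, _, rfl⟩ := hy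
        have h1 : x₀ - c j ∈ S := subset_span ⟨j, rfl⟩
        have h2 : x₀ - c i₀ ∈ S := subset_span ⟨i₀, rfl⟩
        have heq : c j - c i₀ = (x₀ - c i₀) - (x₀ - c j) := by abel
        rw [heq]; exact sub_mem h2 h1
      have hinf : W ⊓ span ℝ {ν} = ⊥ := by
        rw [eq_bot_iff]
        intro z hz
        rw [Submodule.mem_inf] at hz
        obtain ⟨hzW, hzν⟩ := hz
        rw [Submodule.mem_span_singleton] at hzν
        obtain ⟨a, rfl⟩ := hzν
        exact W.orthogonal_disjoint.le_bot ⟨hzW, Wᗮ.smul_mem a hν⟩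
      have hsup : W ⊔ span ℝ {ν} = ⊤ := by
        apply Submodule.eq_top_of_finrank_eq
        have htot := Submodule.finrank_sup_add_finrank_inf_eq W (span ℝ {ν})
        rw [hinf, finrank_bot, add_zero, finrank_span_singleton hν0, hcase] at htot
        rw [finrank_euclideanSpace_fin]
        omega
      rw [eq_top_iff, ← hsup]
      refine sup_le hWS ?_
      rw [span_le, Set.singleton_subset_iff]
      exact hν_mem
    have hbij := aux_phi_bij c x₀ hspan
    set L := ContinuousLinearMap.pi fun i => (2 : ℝ) • innerSL ℝ (x₀ - c i) with hLdef
    set e : EuclideanSpace ℝ (Fin d) ≃ₗ[ℝ] (Fin d → ℝ) :=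
      LinearEquiv.ofBijective L.toLinearMap hbij with hedef
    set e' := e.toContinuousLinearEquiv with he'def
    have he : (e' : EuclideanSpace ℝ (Fin d) →L[ℝ] (Fin d → ℝ)) = L := by
      ext v
      rfl
    set Φ : EuclideanSpace ℝ (Fin d) → Fin d → ℝ := fun x i => ⟪x - c i, x - c i⟫ with hΦdef
    have hΦd : HasStrictFDerivAt Φ
        (e' : EuclideanSpace ℝ (Fin d) →L[ℝ] (Fin d → ℝ)) x₀ := by
      rw [he]
      exact aux_phi_deriv c x₀
    have hmap := hΦd.map_nhds_eq_of_equiv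
    have hrange : Set.range Φ ∈ nhds (Φ x₀) := by
      rw [← hmap, Filter.mem_map, Set.preimage_range]
      exact Filter.univ_mem
    obtain ⟨ε, hε, hball⟩ := Metric.mem_nhds_iff.mp hrange
    set q : Fin d → ℝ := Φ x₀ with hq
    set s : ℕ → ℝ := fun k => q i₀ + ε / (k + 2) with hsdef
    have hs_inj : Function.Injective s := by
      have hmono : StrictAnti s := by
        intro a b hab
        simp only [hsdef, add_lt_add_iff_left]
        apply div_lt_div_of_pos_left hε (by positivity)
        have : (a : ℝ) < b := by exact_mod_cast hab
        linarith
      exact hmono.injective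
    have hs_ball : ∀ k : ℕ, |s k - q i₀| < ε := by
      intro k
      simp only [hsdef, add_sub_cancel_left]
      rw [abs_of_pos (by positivity)]
      apply div_lt_self hε
      have : (0 : ℝ) ≤ k := Nat.cast_nonneg k
      linarith
    set i₁ : Fin d := ⟨1, by omega⟩ with hi₁def
    have hi₁ : i₁ ≠ i₀ := by
      intro h
      have := congrArg Fin.val h
      simp [hi₁def, hi₀def] at this
    set T : Set (EuclideanSpace ℝ (Fin d)) :=
      ⋃ k : ℕ, {x ∈ X i₀ | ‖x - c i₀‖ = Real.sqrt (s k)} with hT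
    have hTc : T.Countable := Set.countable_iUnion fun k => ((hX i₀ _).countable)
    have hS'c : ((fun x => Φ x i₁) '' T).Countable := hTc.image _
    obtain ⟨ρ₁, hρ₁mem, hρ₁⟩ :=
      aux_exists_Ioo_not_mem (show q i₁ - ε < q i₁ + ε by linarith) hS'c
    set r : ℕ → Fin d → ℝ := fun k i => if i = i₀ then s k else if i = i₁ then ρ₁ else q i
      with hrdef
    have hrball : ∀ k, r k ∈ Metric.ball q ε := by
      intro k
      rw [Metric.mem_ball, dist_pi_lt_iff hε]
      intro i
      by_cases h0 : i = i₀
      · subst h0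
        have hval : r k i₀ = s k := by simp [hrdef]
        rw [hval, Real.dist_eq]
        exact hs_ball k
      · by_cases h1 : i = i₁
        · subst h1
          have hval : r k i₁ = ρ₁ := by simp [hrdef, h0]
          rw [hval, Real.dist_eq, abs_sub_lt_iff]
          obtain ⟨hl, hr'⟩ := hρ₁mem
          constructor <;> linarith
        · simp [hrdef, h0, h1, hε]
    have hxk : ∀ k, ∃ y : EuclideanSpace ℝ (Fin d), Φ y = r k := fun k => hball (hrball k)
    choose x hx using hxk
    have hΦnorm : ∀ (y : EuclideanSpace ℝ (Fin d)) (i : Fin d),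
        ‖y - c i‖ = Real.sqrt (Φ y i) := by
      intro y i
      rw [hΦdef]
      simp only
      rw [real_inner_self_eq_norm_sq, Real.sqrt_sq (norm_nonneg _)]
    have hx0' : ∀ k, Φ (x k) i₀ = s k := by
      intro k
      rw [hx k]
      simp [hrdef]
    have hxi₁ : ∀ k, Φ (x k) i₁ = ρ₁ := by
      intro k
      rw [hx k]
      simp [hrdef, hi₁]
    have hnot0 : ∀ k, x k ∉ X i₀ := by
      intro k hk
      have hxT : x k ∈ T :=
        Set.mem_iUnion.2 ⟨k, hk, by rw [hΦnorm, hx0']⟩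
      exact hρ₁ ⟨x k, hxT, hxi₁ k⟩
    have hx_inj : Function.Injective x := by
      intro a b hab
      apply hs_inj
      rw [← hx0' a, ← hx0' b, hab]
    have hcover : ∀ k, ∃ i, k ∈ {m | x m ∈ X i} := by
      intro k
      have hxu : x k ∈ ⋃ i, X i := hU ▸ Set.mem_univ _
      obtain ⟨i, hi⟩ := Set.mem_iUnion.mp hxu
      exact ⟨i, hi⟩
    obtain ⟨i, hi_inf⟩ := aux_pigeonhole _ hcover
    have hi0 : i ≠ i₀ := by
      rintro rfl
      obtain ⟨k, hk⟩ := hi_inf.nonempty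
      exact hnot0 k hk
    have hri : ∀ k, Φ (x k) i = r 0 i := by
      intro k
      rw [hx k]
      simp [hrdef, hi0]
    have hinfY : {y ∈ X i | ‖y - c i‖ = Real.sqrt (r 0 i)}.Infinite := by
      apply Set.Infinite.mono _ (hi_inf.image (hx_inj.injOn))
      rintro y ⟨k, hk, rfl⟩
      exact ⟨hk, by rw [hΦnorm, hri]⟩
    exact hinfY (hX i _)
  · -- Case A : centers in a low-dimensional flat
    have hperp2 : 2 ≤ finrank ℝ Wᗮ := by omega
    set B := stdOrthonormalBasis ℝ ↥Wᗮ with hB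
    set u : EuclideanSpace ℝ (Fin d) := ((B ⟨0, by omega⟩ : ↥Wᗮ) : EuclideanSpace ℝ (Fin d))
      with hu_def
    set w : EuclideanSpace ℝ (Fin d) := ((B ⟨1, by omega⟩ : ↥Wᗮ) : EuclideanSpace ℝ (Fin d))
      with hw_def
    have hu : u ∈ Wᗮ := (B ⟨0, by omega⟩).2
    have hw : w ∈ Wᗮ := (B ⟨1, by omega⟩).2
    have hnu : ‖u‖ = 1 := by
      rw [hu_def, Submodule.norm_coe]
      exact B.orthonormal.1 _
    have hnw : ‖w‖ = 1 := by
      rw [hw_def, Submodule.norm_coe]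
      exact B.orthonormal.1 _
    have huw : ⟪u, w⟫ = 0 := by
      rw [hu_def, hw_def, ← Submodule.coe_inner]
      exact B.orthonormal.2 (by intro h; have := congrArg Fin.val h; simp at this)
    have hwu : ⟪w, u⟫ = 0 := by rw [real_inner_comm]; exact huw
    set f : ℝ → EuclideanSpace ℝ (Fin d) :=
      fun a => c i₀ + (Real.sqrt (1 + a ^ 2))⁻¹ • (u + a • w) with hf
    have hsq : ∀ a : ℝ, Real.sqrt (1 + a ^ 2) > 0 := by
      intro a
      apply Real.sqrt_pos.2
      positivity
    have hinner_u : ∀ a : ℝ, ⟪f a - c i₀, u⟫ = (Real.sqrt (1 + a ^ 2))⁻¹ := by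
      intro a
      simp only [hf]
      rw [add_sub_cancel_left]
      rw [real_inner_smul_left, inner_add_left, real_inner_smul_left,
        real_inner_self_eq_norm_sq, hnu, hwu]
      ring
    have hinner_w : ∀ a : ℝ, ⟪f a - c i₀, w⟫ = a * (Real.sqrt (1 + a ^ 2))⁻¹ := by
      intro a
      simp only [hf]
      rw [add_sub_cancel_left]
      rw [real_inner_smul_left, inner_add_left, real_inner_smul_left,
        real_inner_self_eq_norm_sq, hnw, huw]
      ring
    have hf_inj : Function.Injective f := by
      intro a b hab
      have h1 : (Real.sqrt (1 + a ^ 2))⁻¹ = (Real.sqrt (1 + b ^ 2))⁻¹ := by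
        rw [← hinner_u a, ← hinner_u b, hab]
      have h2 : a * (Real.sqrt (1 + a ^ 2))⁻¹ = b * (Real.sqrt (1 + b ^ 2))⁻¹ := by
        rw [← hinner_w a, ← hinner_w b, hab]
      rw [h1] at h2
      have hbpos : (Real.sqrt (1 + b ^ 2))⁻¹ ≠ 0 := by
        exact inv_ne_zero (ne_of_gt (hsq b))
      exact mul_right_cancel₀ hbpos h2
    have hfnorm : ∀ (a : ℝ) (j : Fin d),
        ‖f a - c j‖ = Real.sqrt (1 + ‖c i₀ - c j‖ ^ 2) := by
      intro a j
      have hmemW : c i₀ - c j ∈ W := by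
        have := W.neg_mem (hmem j)
        rwa [neg_sub] at this
      have hνW : (Real.sqrt (1 + a ^ 2))⁻¹ • (u + a • w) ∈ Wᗮ :=
        Wᗮ.smul_mem _ (Wᗮ.add_mem hu (Wᗮ.smul_mem a hw))
      have hfj : f a - c j = (Real.sqrt (1 + a ^ 2))⁻¹ • (u + a • w) + (c i₀ - c j) := by
        simp only [hf]; abel
      have hortho : ⟪(Real.sqrt (1 + a ^ 2))⁻¹ • (u + a • w), c i₀ - c j⟫ = 0 :=
        Submodule.inner_left_of_mem_orthogonal hmemW hνW
      have hν1 : ‖(Real.sqrt (1 + a ^ 2))⁻¹ • (u + a • w)‖ ^ 2 = 1 := by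
        rw [norm_smul, mul_pow, norm_add_sq_real, real_inner_smul_right, huw,
          norm_smul, hnu, hnw]
        rw [norm_inv, Real.norm_eq_abs, abs_of_pos (hsq a), Real.norm_eq_abs, mul_pow, sq_abs]
        have hss : Real.sqrt (1 + a ^ 2) ^ 2 = 1 + a ^ 2 := Real.sq_sqrt (by positivity)
        rw [inv_pow, hss]
        field_simp
        ring
      have : ‖f a - c j‖ ^ 2 = 1 + ‖c i₀ - c j‖ ^ 2 := by
        rw [hfj, norm_add_sq_real, hortho, hν1]
        ring
      rw [← this, Real.sqrt_sq (norm_nonneg _)]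
    have hsub : Set.range f ⊆
        ⋃ j, {y ∈ X j | ‖y - c j‖ = Real.sqrt (1 + ‖c i₀ - c j‖ ^ 2)} := by
      rintro y ⟨a, rfl⟩
      have : f a ∈ ⋃ j, X j := hU ▸ Set.mem_univ _
      obtain ⟨j, hj⟩ := Set.mem_iUnion.mp this
      exact Set.mem_iUnion.2 ⟨j, hj, hfnorm a j⟩
    have hfin : (⋃ j, {y ∈ X j | ‖y - c j‖ = Real.sqrt (1 + ‖c i₀ - c j‖ ^ 2)}).Finite :=
      Set.finite_iUnion fun j => hX j _
    exact Set.infinite_range_of_injective hf_inj (hfin.subset hsub)
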